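/- arXiv:1405.6854 — 2 statements merged into one kernel-verified Lean document; each statement's English description precedes it below -/
import Mathlib

section
/- The operation T ⋆ S defined on planar rooted trees by grafting S as a new subtree of the root of T in each possible position (i.e., if T = B₊(r, T₁…Tₙ), then T ⋆ S = Σ_{i=0}^{n} B₊(r, T₁…Tᵢ S Tᵢ₊₁…Tₙ)) satisfies the right non-associative permutative (right NAP) identity: (T ⋆ S) ⋆ U = (T ⋆ U) ⋆ S for all planar rooted trees T, S, U. -/
/-- Planar rooted trees: a root together with an ordered (planar) list of subtrees. -/
inductive PTree : Type
  | node : List PTree → PTree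

namespace PTree

/-- `T ⋆ S` : the sum, in the vector space spanned by planar rooted trees, of all
trees obtained by inserting `S` as a new child subtree of the root of `T`, in each
possible position.  If `T = B₊(T₁ … Tₙ)` then
`T ⋆ S = Σ_{i=0}^{n} B₊(T₁ … Tᵢ S Tᵢ₊₁ … Tₙ)`. -/
noncomputable def star (T S : PTree) : PTree →₀ ℚ :=
  match T with
  | node l => ∑ i ∈ Finset.range (l.length + 1), Finsupp.single (node (l.insertIdx i S)) 1

/-- Linear extension of `⋆` in its first argument. -/
noncomputable def starL (x : PTree →₀ ℚ) (U : PTree) : PTree →₀ ℚ :=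
  x.sum fun T c => c • star T U

lemma starL_add (x y : PTree →₀ ℚ) (U : PTree) :
    starL (x + y) U = starL x U + starL y U := by
  unfold starL
  exact Finsupp.sum_add_index' (fun T => zero_smul ℚ (star T U))
    (fun T a b => add_smul a b (star T U))

lemma starL_single_one (T U : PTree) : starL (Finsupp.single T 1) U = star T U := by
  unfold starL
  rw [Finsupp.sum_single_index (zero_smul ℚ (star T U)), one_smul]

lemma starL_sum_single {ι : Type*} (s : Finset ι) (f : ι → PTree) (U : PTree) :
    starL (∑ i ∈ s, Finsupp.single (f i) (1 : ℚ)) U = ∑ i ∈ s, star (f i) U := by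
  classical
  induction s using Finset.induction_on with
  | empty => simp [starL, Finsupp.sum_zero_index]
  | insert _ _ h ih =>
      rw [Finset.sum_insert h, Finset.sum_insert h, starL_add, starL_single_one, ih]

/-- The index swap used in the NAP bijection. -/
def sw (p : ℕ × ℕ) : ℕ × ℕ := if p.2 ≤ p.1 then (p.2, p.1 + 1) else (p.2 - 1, p.1)

lemma sw_le {p : ℕ × ℕ} (h : p.2 ≤ p.1) : sw p = (p.2, p.1 + 1) := if_pos h

lemma sw_gt {p : ℕ × ℕ} (h : p.1 < p.2) : sw p = (p.2 - 1, p.1) := if_neg (not_le.2 h)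

lemma sw_sw (p : ℕ × ℕ) : sw (sw p) = p := by
  rcases p with ⟨a, b⟩
  rcases le_or_gt b a with h | h
  · rw [sw_le (p := (a, b)) h, sw_gt (p := (b, a + 1)) (Nat.lt_succ_of_le h)]
    rfl
  · rw [sw_gt (p := (a, b)) h, sw_le (p := (b - 1, a)) (show a ≤ b - 1 by omega)]
    exact Prod.ext_iff.mpr ⟨rfl, by show b - 1 + 1 = b; omega⟩

lemma sw_mem {n : ℕ} {p : ℕ × ℕ} (hp : p ∈ Finset.range (n + 1) ×ˢ Finset.range (n + 2)) :
    sw p ∈ Finset.range (n + 1) ×ˢ Finset.range (n + 2)  := by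
  rcases p with ⟨a, b⟩
  simp only [Finset.mem_product, Finset.mem_range] at hp
  rcases le_or_gt b a with h | h
  · rw [sw_le (p := (a, b)) h]
    simp only [Finset.mem_product, Finset.mem_range]
    omega
  · rw [sw_gt (p := (a, b)) h]
    simp only [Finset.mem_product, Finset.mem_range]
    omega

end PTree

/-- The grafting product `⋆` on planar rooted trees satisfies the right
non-associative permutative (right NAP) identity `(T ⋆ S) ⋆ U = (T ⋆ U) ⋆ S`. -/
theorem star_right_nap (T S U : PTree) :
    PTree.starL (PTree.star T S) U = PTree.starL (PTree.star T U) S := by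
  obtain ⟨l⟩ := T
  set n := l.length with hn
  have expand : ∀ X Y : PTree,
      PTree.starL (PTree.star (PTree.node l) X) Y =
      ∑ p ∈ Finset.range (n + 1) ×ˢ Finset.range (n + 2),
        Finsupp.single (PTree.node ((l.insertIdx p.1 X).insertIdx p.2 Y)) (1 : ℚ) := by
    intro X Y
    show PTree.starL (∑ i ∈ Finset.range (n + 1),
        Finsupp.single (PTree.node (l.insertIdx i X)) (1 : ℚ)) Y = _
    rw [PTree.starL_sum_single, Finset.sum_product]
    refine Finset.sum_congr rfl fun i hi => ?_
    rw [Finset.mem_range] at hi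
    show ∑ j ∈ Finset.range ((l.insertIdx i X).length + 1), _ = _
    rw [List.length_insertIdx, if_pos (by omega)]
  rw [expand S U, expand U S]
  refine Finset.sum_nbij' (i := PTree.sw) (j := PTree.sw)
    (fun p hp => PTree.sw_mem hp) (fun p hp => PTree.sw_mem hp)
    (fun p _ => PTree.sw_sw p) (fun p _ => PTree.sw_sw p) ?_
  intro p hp
  rcases p with ⟨a, b⟩
  simp only [Finset.mem_product, Finset.mem_range] at hp
  rcases le_or_gt b a with h | h
  · rw [PTree.sw_le (p := (a, b)) h]
    exact congrArg (fun t => Finsupp.single (PTree.node t) (1 : ℚ))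
      (List.insertIdx_comm U S (i := b) (j := a) (l := l) h (by omega)).symm
  · rw [PTree.sw_gt (p := (a, b)) h]
    have h2 : b - 1 + 1 = b := by omega
    have h3 := List.insertIdx_comm S U (i := a) (j := b - 1) (l := l) (by omega) (by omega)
    rw [h2] at h3
    exact congrArg (fun t => Finsupp.single (PTree.node t) (1 : ℚ)) h3
end

section
/- The symmetrization map φ from non-planar rooted trees to linear combinations of planar rooted trees, defined recursively by φ(•) = • and φ(B₊(r, T₁⋯T_k)) = B₊(r, φ(T₁) ⧢ ⋯ ⧢ φ(T_k)) (shuffle product of the children), sends each non-planar rooted tree T to the sum of all its distinct planar representatives, each appearing with coefficient 1. -/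
open scoped Classical

/-- Planar rooted trees with vertices labelled in `A`. -/
inductive LP (A : Type) : Type
  | node : A → List (LP A) → LP A

namespace LP

variable {A : Type}

/-- The list of labels of the vertices of a planar tree (root first). -/
def labels : LP A → List A
  | node a l => a :: (l.attach.map fun t => labels t.1).flatten
decreasing_by
  have := List.sizeOf_lt_of_mem t.2
  simp only [LP.node.sizeOf_spec]
  omega

/-- Shuffle a single tree `t` into a linear combination of forests: `[t] ⧢ x`. -/
noncomputable def shInsert (t : LP A) (x : List (LP A) →₀ ℤ) : List (LP A) →₀ ℤ :=
  x.sum fun l c =>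
    c • ∑ i ∈ Finset.range (l.length + 1), Finsupp.single (l.insertIdx i t) 1

/-- The shuffle product `x₁ ⧢ x₂ ⧢ ⋯ ⧢ x_k` of linear combinations of trees, as a
linear combination of forests. -/
noncomputable def shuffleAll : List (LP A →₀ ℤ) → (List (LP A) →₀ ℤ)
  | [] => Finsupp.single [] 1
  | x :: xs => x.sum fun t c => c • shInsert t (shuffleAll xs)

/-- The symmetrization map `φ`, defined recursively by `φ(•) = •` and
`φ(B₊(r, T₁⋯T_k)) = B₊(r, φ(T₁) ⧢ ⋯ ⧢ φ(T_k))`. -/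
noncomputable def phi : LP A → (LP A →₀ ℤ)
  | node a l => Finsupp.mapDomain (node a) (shuffleAll (l.attach.map fun t => phi t.1))
decreasing_by
  have := List.sizeOf_lt_of_mem t.2
  simp only [LP.node.sizeOf_spec]
  omega

/-- Two planar labelled trees are planar representatives of the same non-planar tree
iff they agree up to permuting the children lists (recursively). -/
inductive PEq : LP A → LP A → Prop
  | node (a : A) (l l' l'' : List (LP A)) :
      List.Forall₂ PEq l l'' → l''.Perm l' → PEq (node a l) (node a l')

end LP

namespace LP

variable {A : Type}

theorem forall2_eraseIdx {α β} {R : α → β → Prop} :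
    ∀ {l₁ : List α} {l₂ : List β}, List.Forall₂ R l₁ l₂ →
      ∀ i, List.Forall₂ R (l₁.eraseIdx i) (l₂.eraseIdx i)
  | _, _, List.Forall₂.nil, _ => by simp [List.eraseIdx_nil]
  | _, _, List.Forall₂.cons h t, 0 => by simpa using t
  | _, _, List.Forall₂.cons h t, (i+1) => by
      simpa using List.Forall₂.cons h (forall2_eraseIdx t i)

theorem forall2_insertIdx {α β} {R : α → β → Prop} {a : α} {b : β} (hab : R a b) :
    ∀ {l₁ : List α} {l₂ : List β}, List.Forall₂ R l₁ l₂ →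
      ∀ i : ℕ, List.Forall₂ R (l₁.insertIdx i a) (l₂.insertIdx i b)
  | _, _, h, 0 => by simpa [List.insertIdx_zero] using List.Forall₂.cons hab h
  | _, _, List.Forall₂.nil, (i+1) => by simp [List.insertIdx_succ_nil]
  | _, _, List.Forall₂.cons h t, (i+1) => by
      simpa [List.insertIdx_succ_cons] using List.Forall₂.cons h (forall2_insertIdx hab t i)

theorem forall2_mem_left {α β} {R : α → β → Prop} :
    ∀ {l₁ : List α} {l₂ : List β}, List.Forall₂ R l₁ l₂ → ∀ {x : α}, x ∈ l₁ → ∃ y ∈ l₂, R x y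
  | _, _, List.Forall₂.cons h t, x, hx => by
      rcases List.mem_cons.mp hx with rfl | hx
      · exact ⟨_, List.mem_cons_self, h⟩
      · obtain ⟨y, hy, hxy⟩ := forall2_mem_left t hx
        exact ⟨y, List.mem_cons_of_mem _ hy, hxy⟩

theorem insertIdx_getElem_eraseIdx {α} :
    ∀ (l : List α) (i : ℕ) (h : i < l.length), (l.eraseIdx i).insertIdx i l[i] = l
  | c :: tl, 0, _ => by simp [List.insertIdx_zero]
  | c :: tl, (i+1), h => by
      simpa [List.insertIdx_succ_cons] using
        insertIdx_getElem_eraseIdx tl i (by simpa using Nat.lt_of_succ_lt_succ h)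

/-- The root label of a tree. -/
def rootL : LP A → A
  | node a _ => a

theorem PEq.rootL_eq {s t : LP A} (h : PEq s t) : rootL s = rootL t := by
  cases h; rfl

theorem rootL_mem_labels (t : LP A) : rootL t ∈ labels t := by
  cases t with
  | node a l => rw [labels]; exact List.mem_cons_self

theorem labels_node (a : A) (l : List (LP A)) :
    labels (node a l) = a :: (l.map labels).flatten := by
  rw [labels, List.attach_map_val (l := l) (f := labels)]

/-- `ls` is a list of planar representatives of the forest `l`, up to order. -/
def FR (ls l : List (LP A)) : Prop := ∃ l'', List.Forall₂ PEq ls l'' ∧ l''.Perm l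

theorem FR_nil {ls : List (LP A)} : FR ls [] ↔ ls = [] := by
  constructor
  · rintro ⟨l'', h2, hp⟩
    rw [List.perm_nil.mp hp] at h2
    exact List.forall₂_nil_right_iff.mp h2
  · rintro rfl; exact ⟨[], List.Forall₂.nil, List.Perm.nil⟩

theorem FR.root_mem {ls l : List (LP A)} (h : FR ls l) {x : LP A} (hx : x ∈ ls) :
    rootL x ∈ (l.map labels).flatten := by
  obtain ⟨l'', h2, hp⟩ := h
  obtain ⟨y, hy, hxy⟩ := forall2_mem_left h2 hx
  rw [hxy.rootL_eq]
  exact List.mem_flatten.mpr ⟨labels y, List.mem_map_of_mem (hp.subset hy), rootL_mem_labels y⟩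

theorem triple_fr {t : LP A} {rest : List (LP A)} {s : LP A} {m : List (LP A)} {i : ℕ}
    (hst : PEq s t) (hm : FR m rest) (hi : i ≤ m.length) :
    FR (m.insertIdx i s) (t :: rest) := by
  obtain ⟨l'', h2, hp⟩ := hm
  have hlen := h2.length_eq
  exact ⟨l''.insertIdx i t, forall2_insertIdx hst h2 i,
    (List.perm_insertIdx t l'' (by omega)).trans (hp.cons t)⟩

theorem FR_cons {t : LP A} {rest ls : List (LP A)} (h : FR ls (t :: rest)) :
    ∃ s m i, PEq s t ∧ FR m rest ∧ i ≤ m.length ∧ m.insertIdx i s = ls := by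
  obtain ⟨l'', h2, hp⟩ := h
  have ht : t ∈ l'' := hp.mem_iff.mpr (List.mem_cons_self)
  obtain ⟨i, hi, hgi⟩ := List.mem_iff_getElem.mp ht
  have hlen := h2.length_eq
  have hins : (l''.eraseIdx i).insertIdx i t = l'' := by
    conv_rhs => rw [← insertIdx_getElem_eraseIdx l'' i hi]
    rw [hgi]
  have hperm : (l''.eraseIdx i).Perm rest := by
    have h4 : l''.Perm (t :: l''.eraseIdx i) := by
      conv_lhs => rw [← hins]
      exact List.perm_insertIdx _ _ (by have := List.length_eraseIdx_add_one hi; omega)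
    exact (h4.symm.trans hp).cons_inv
  refine ⟨ls[i]'(by omega), ls.eraseIdx i, i, ?_, ⟨l''.eraseIdx i, forall2_eraseIdx h2 i, hperm⟩,
    by have := List.length_eraseIdx_add_one (show i < ls.length by omega); omega, ?_⟩
  · have := (List.forall₂_iff_get.mp h2).2 i (by omega) hi
    simpa [List.get_eq_getElem, hgi] using this
  · exact insertIdx_getElem_eraseIdx ls i (by omega)

theorem root_unique {t : LP A} {rest : List (LP A)}
    (hn : (labels t ++ (rest.map labels).flatten).Nodup)
    {ls : List (LP A)} {s : LP A} {m : List (LP A)} {i : ℕ}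
    (hst : PEq s t) (hm : FR m rest) (hi : i ≤ m.length) (hins : m.insertIdx i s = ls)
    (j : ℕ) (hj : j < ls.length) (hroot : rootL (ls[j]'hj) = rootL t) : j = i := by
  by_contra hne
  have hdisj := List.disjoint_of_nodup_append hn
  have hlen : ls.length = m.length + 1 := by rw [← hins, List.length_insertIdx_of_le_length hi]
  have hmem : ls[j]'hj ∈ m := by
    subst hins
    rcases Nat.lt_or_ge j i with h | h
    · rw [List.getElem_insertIdx_of_lt h hj]
      exact List.getElem_mem _
    · have h' : i < j := by omega
      obtain ⟨k, rfl⟩ : ∃ k, j = i + k + 1 := ⟨j - i - 1, by omega⟩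
      rw [List.getElem_insertIdx_add_succ _ _ _ _ (by omega)]
      exact List.getElem_mem _
  have hmem2 : rootL (ls[j]'hj) ∈ (rest.map labels).flatten := hm.root_mem hmem
  rw [hroot] at hmem2
  exact hdisj (rootL_mem_labels t) hmem2

theorem getElem_eq_of_eq {α} {l l' : List α} (h : l = l') {i : ℕ} (hi : i < l.length) :
    l[i]'hi = l'[i]'(h ▸ hi) := by subst h; rfl

theorem triple_unique {t : LP A} {rest : List (LP A)}
    (hn : (labels t ++ (rest.map labels).flatten).Nodup)
    {ls : List (LP A)} {s s' : LP A} {m m' : List (LP A)} {i i' : ℕ}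
    (hst : PEq s t) (hm : FR m rest) (hi : i ≤ m.length) (hins : m.insertIdx i s = ls)
    (hst' : PEq s' t) (hm' : FR m' rest) (hi' : i' ≤ m'.length) (hins' : m'.insertIdx i' s' = ls) :
    i = i' ∧ s = s' ∧ m = m' := by
  have hlen : ls.length = m.length + 1 := by rw [← hins, List.length_insertIdx_of_le_length hi]
  have hlen' : ls.length = m'.length + 1 := by rw [← hins', List.length_insertIdx_of_le_length hi']
  have hgi : ls[i]'(by omega) = s :=
    (getElem_eq_of_eq hins.symm (by omega)).trans (List.getElem_insertIdx_self (l := m) (x := s) (i := i) (by rw [List.length_insertIdx_of_le_length hi]; omega))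
  have hgi' : ls[i']'(by omega) = s' :=
    (getElem_eq_of_eq hins'.symm (by omega)).trans (List.getElem_insertIdx_self (l := m') (x := s') (i := i') (by rw [List.length_insertIdx_of_le_length hi']; omega))
  have hii : i' = i := root_unique hn hst hm hi hins i' (by omega) (by rw [hgi']; exact hst'.rootL_eq)
  subst hii
  refine ⟨rfl, by rw [← hgi, hgi'], ?_⟩
  have h5 : (m.insertIdx i' s).eraseIdx i' = (m'.insertIdx i' s').eraseIdx i' := by
    rw [hins, hins']
  simpa [List.eraseIdx_insertIdx_self] using h5

theorem shInsert_apply (s : LP A) (x : List (LP A) →₀ ℤ) (ls : List (LP A)) :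
    shInsert s x ls =
      x.sum fun m c => c * ∑ i ∈ Finset.range (m.length + 1),
        (if m.insertIdx i s = ls then (1 : ℤ) else 0) := by
  rw [shInsert, Finsupp.sum_apply]
  refine Finsupp.sum_congr fun m _ => ?_
  rw [Finsupp.smul_apply, Finsupp.finset_sum_apply, smul_eq_mul]
  congr 1
  refine Finset.sum_congr rfl fun i _ => ?_
  simp [Finsupp.single_apply]

theorem shuffle_forest (l : List (LP A)) (hn : ((l.map labels).flatten).Nodup)
    (ih : ∀ t ∈ l, ∀ s, phi t s = if PEq s t then 1 else 0) (ls : List (LP A)) :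
    shuffleAll (l.map phi) ls = if FR ls l then 1 else 0 := by
  induction l generalizing ls with
  | nil =>
    simp only [List.map_nil, shuffleAll, FR_nil]
    simp [Finsupp.single_apply, eq_comm]
  | cons t rest IH =>
    have hn' : (labels t ++ (rest.map labels).flatten).Nodup := by
      simpa only [List.map_cons, List.flatten_cons] using hn
    have hnrest : ((rest.map labels).flatten).Nodup := hn'.of_append_right
    have iht : ∀ s, phi t s = if PEq s t then 1 else 0 := ih t (List.mem_cons_self)
    have hX : ∀ m, shuffleAll (rest.map phi) m = if FR m rest then 1 else 0 :=
      IH hnrest (fun t' h => ih t' (List.mem_cons_of_mem _ h))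
    rw [List.map_cons, shuffleAll, Finsupp.sum_apply]
    simp only [Finsupp.smul_apply, smul_eq_mul, shInsert_apply]
    simp only [Finsupp.sum]
    by_cases hFR : FR ls (t :: rest)
    · obtain ⟨s₀, m₀, i₀, hst₀, hm₀, hi₀, hins₀⟩ := FR_cons hFR
      rw [if_pos hFR]
      have hphis₀ : phi t s₀ = 1 := by rw [iht, if_pos hst₀]
      have hXm₀ : shuffleAll (rest.map phi) m₀ = 1 := by rw [hX, if_pos hm₀]
      have key : ∀ (s' : LP A) (m : List (LP A)) (i : ℕ), PEq s' t → FR m rest →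
          i ∈ Finset.range (m.length + 1) → m.insertIdx i s' = ls →
          i = i₀ ∧ s' = s₀ ∧ m = m₀ := fun s' m i hs' hm hi hins =>
        triple_unique hn' hs' hm (Nat.lt_succ_iff.mp (Finset.mem_range.mp hi)) hins
          hst₀ hm₀ hi₀ hins₀
      rw [Finset.sum_eq_single_of_mem s₀
        (Finsupp.mem_support_iff.mpr (by rw [hphis₀]; exact one_ne_zero)) ?_]
      · rw [hphis₀, one_mul]
        rw [Finset.sum_eq_single_of_mem m₀
          (Finsupp.mem_support_iff.mpr (by rw [hXm₀]; exact one_ne_zero)) ?_]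
        · rw [hXm₀, one_mul]
          rw [Finset.sum_eq_single_of_mem i₀ (Finset.mem_range.mpr (by omega)) ?_]
          · rw [if_pos hins₀]
          · intro i hi hne
            exact if_neg fun hins => hne (key s₀ m₀ i hst₀ hm₀ hi hins).1
        · intro m hm hne
          have hFRm : FR m rest := by
            by_contra hc
            exact (Finsupp.mem_support_iff.mp hm) (by rw [hX, if_neg hc])
          refine mul_eq_zero_of_right _ (Finset.sum_eq_zero fun i hi => ?_)
          exact if_neg fun hins => hne (key s₀ m i hst₀ hFRm hi hins).2.2
      · intro s' hs' hne
        have hPE : PEq s' t := by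
          by_contra hc
          exact (Finsupp.mem_support_iff.mp hs') (by rw [iht, if_neg hc])
        refine mul_eq_zero_of_right _ (Finset.sum_eq_zero fun m hm => ?_)
        have hFRm : FR m rest := by
          by_contra hc
          exact (Finsupp.mem_support_iff.mp hm) (by rw [hX, if_neg hc])
        refine mul_eq_zero_of_right _ (Finset.sum_eq_zero fun i hi => ?_)
        exact if_neg fun hins => hne (key s' m i hPE hFRm hi hins).2.1
    · rw [if_neg hFR]
      refine Finset.sum_eq_zero fun s' hs' => ?_
      have hPE : PEq s' t := by
        by_contra hc
        exact (Finsupp.mem_support_iff.mp hs') (by rw [iht, if_neg hc])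
      refine mul_eq_zero_of_right _ (Finset.sum_eq_zero fun m hm => ?_)
      have hFRm : FR m rest := by
        by_contra hc
        exact (Finsupp.mem_support_iff.mp hm) (by rw [hX, if_neg hc])
      refine mul_eq_zero_of_right _ (Finset.sum_eq_zero fun i hi => ?_)
      refine if_neg fun hins => hFR ?_
      rw [← hins]
      exact triple_fr hPE hFRm (Nat.lt_succ_iff.mp (Finset.mem_range.mp hi))

end LP

theorem phi_eq_aux {A : Type} : ∀ (n : ℕ) (t : LP A), sizeOf t ≤ n → (LP.labels t).Nodup →
    ∀ s, LP.phi t s = if LP.PEq s t then 1 else 0 := by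
  intro n
  induction n with
  | zero =>
    intro t h
    cases t with
    | node a l => simp only [LP.node.sizeOf_spec] at h; omega
  | succ n ihn =>
    intro t hsize hnodup s
    obtain ⟨a, l⟩ := t
    simp only [LP.node.sizeOf_spec] at hsize
    rw [LP.labels_node] at hnodup
    have hn2 : ((l.map LP.labels).flatten).Nodup := (List.nodup_cons.mp hnodup).2
    have ih : ∀ t' ∈ l, ∀ s', LP.phi t' s' = if LP.PEq s' t' then 1 else 0 := by
      intro t' ht' s'
      have hnd : (LP.labels t').Nodup :=
        (List.nodup_flatten.mp hn2).1 _ (List.mem_map_of_mem (f := LP.labels) ht')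
      have hlt := List.sizeOf_lt_of_mem ht'
      exact ihn t' (by omega) hnd s'
    rw [LP.phi, List.attach_map_val (l := l) (f := LP.phi)]
    obtain ⟨b, ls⟩ := s
    by_cases hb : b = a
    · subst hb
      rw [Finsupp.mapDomain_apply (fun x y h => by injection h) _ ls,
        LP.shuffle_forest l hn2 ih ls]
      by_cases hfr : LP.FR ls l
      · rw [if_pos hfr, if_pos]
        obtain ⟨l'', h2, hp⟩ := hfr
        exact LP.PEq.node b ls l l'' h2 hp
      · rw [if_neg hfr, if_neg]
        intro hpe
        cases hpe with
        | node a'' l1 l2 l3 h2 hp => exact hfr ⟨l3, h2, hp⟩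
    · rw [Finsupp.mapDomain_notin_range _ _
          (by rintro ⟨ls', h⟩; injection h with h1 h2; exact hb h1.symm),
        if_neg (by intro hpe; cases hpe; exact hb rfl)]

/-- The symmetrization map `φ` sends each labelled planar rooted tree (with pairwise
distinct labels) to the sum of all the distinct planar representatives of its
underlying non-planar tree, each appearing with coefficient `1`:  the coefficient of
`s` in `φ(t)` is `1` if `s` is a planar representative of (the non-planar tree
underlying) `t`, and `0` otherwise. -/
theorem phi_eq_sum_planar_representatives {A : Type} (t : LP A)
    (hnodup : (LP.labels t).Nodup) (s : LP A) :
    LP.phi t s = if LP.PEq s t then 1 else 0 :=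
  phi_eq_aux (sizeOf t) t le_rfl hnodup s
end
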